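/- For every ζ < ω₁, the pointed structures (N, (0, x₀)) and (N, (0, x₁)) are EF_ζ-equivalent: the isomorphism player wins the Ehrenfeucht–Fraïssé game of length ζ. Consequently there exist non-isomorphic structures of cardinality ℵ₁ that are EF_ζ-equivalent for every ζ < ω₁. -/

import Mathlib

noncomputable section
open Set

/-- `G` is the vector space over `ℤ/2ℤ` with basis indexed by `ℕ`. -/
abbrev G : Type := ℕ →₀ ZMod 2

/-- The basis element `xₙ`. -/
def xg (n : ℕ) : G := Finsupp.single n 1

/-- `G⁰ₙ`: the subspace generated by the `x_k` for `k ≠ n`. -/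
def G0 (n : ℕ) : Set G :=
  (Submodule.span (ZMod 2) {y : G | ∃ k : ℕ, k ≠ n ∧ y = xg k} : Submodule (ZMod 2) G)

/-- `G¹ₙ = xₙ + G⁰ₙ`, the nontrivial coset. -/
def G1 (n : ℕ) : Set G := (fun z => xg n + z) '' G0 n

/-- The family `𝒢 = {Gˡₙ : n < ω, l ∈ {0,1}}`. -/
def Gfam : Set (Set G) := {S | ∃ n : ℕ, S = G0 n ∨ S = G1 n}

/-- The first uncountable ordinal. -/
def omega1 : Ordinal := (Cardinal.aleph 1).ord

/-- The universe of the structure `M`: elements of the parts `A_α = {α} × G`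
and of the parts `B_α ⊆ {η : α → 𝒢}` (sequences are padded by `∅` beyond `α`). -/
inductive MU : Type 1 where
  | a : Ordinal → G → MU
  | b : Ordinal → (Ordinal → Set G) → MU

/-- The condition for `η` (as a total function, padded by `∅`) to code a member of `B_α`:
its values below `α` are in `𝒢` and for some `n` it equals `G⁰ₙ` with finitely many
exceptions. -/
def okB (α : Ordinal) (η : Ordinal → Set G) : Prop :=
  (∀ β, β < α → η β ∈ Gfam) ∧ (∀ β, ¬ β < α → η β = ∅) ∧
    ∃ n : ℕ, {β : Ordinal | β < α ∧ η β ≠ G0 n}.Finite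

/-- The universe of `M_{<γ}`, i.e. `∪ {A_β ∪ B_β : β < γ}`. -/
def MUuniv (γ : Ordinal) : Set MU :=
  {u | match u with
       | .a α _ => α < γ
       | .b α η => α < γ ∧ okB α η}

/-- `u` belongs to the `A`-part (the predicate `P₁`; `P₂` is its negation). -/
def isA : MU → Prop
  | .a _ _ => True
  | .b _ _ => False

/-- The index `α` of the part `A_α` or `B_α` containing the element. -/
def idx : MU → Ordinal
  | .a α _ => α
  | .b α _ => α

/-- The relation `E₁`. -/
def E1 (u v : MU) : Prop := isA u ∧ isA v ∧ idx u ≤ idx v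

/-- The relation `E₂`. -/
def E2 (u v : MU) : Prop := ¬ isA u ∧ ¬ isA v ∧ idx u ≤ idx v

/-- The unary function `F_y`: translation by `y` on each `A_α`, identity on each `B_α`. -/
def Fy (y : G) : MU → MU
  | .a α g => .a α (g + y)
  | .b α η => .b α η

/-- The relation `R = {(η, (α,x)) : α < lh η, x ∈ η(α)}`. -/
def Rmem (u v : MU) : Prop :=
  ∃ (β : Ordinal) (η : Ordinal → Set G) (α : Ordinal) (g : G),
    u = .b β η ∧ v = .a α g ∧ α < β ∧ g ∈ η α

/-- `f` is an automorphism of the restriction of `M` to the set `S`. -/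
structure IsAut (S : Set MU) (f : MU → MU) : Prop where
  bij : Set.BijOn f S S
  p1 : ∀ u ∈ S, (isA (f u) ↔ isA u)
  e1 : ∀ u ∈ S, ∀ v ∈ S, (E1 (f u) (f v) ↔ E1 u v)
  e2 : ∀ u ∈ S, ∀ v ∈ S, (E2 (f u) (f v) ↔ E2 u v)
  fy : ∀ (y : G), ∀ u ∈ S, f (Fy y u) = Fy y (f u)
  r : ∀ u ∈ S, ∀ v ∈ S, (Rmem (f u) (f v) ↔ Rmem u v)

/-- The map `f_ν`: translation by `ν(α)` on `A_α`, coset translation on the `B`-parts. -/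
def fnu (ν : Ordinal → G) : MU → MU
  | .a α g => .a α (g + ν α)
  | .b α η => .b α (fun β => (fun z => ν β + z) '' η β)

/-- The support-finiteness condition on `ν : γ → G`:
for every `β < γ` and every `n`, `{α < β : n ∈ supp ν(α)}` is finite. -/
def SuppFin (γ : Ordinal) (ν : Ordinal → G) : Prop :=
  ∀ β < γ, ∀ n : ℕ, {α : Ordinal | α < β ∧ n ∈ (ν α).support}.Finite

/-- The relation `R₁` of the expansion `M_p`, for the parameter sequence
`p = ⟨(β_α, g_α) : α < ω₁⟩`:
`R₁ = {((β_α, y₂), (α, y₁)) : α < ω₁, g_α(y₁) = y₂}`. -/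
def R1 (βf : Ordinal → Ordinal) (gf : Ordinal → (G →+ G)) (u v : MU) : Prop :=
  ∃ (α : Ordinal) (y₁ y₂ : G),
    α < omega1 ∧ v = .a α y₁ ∧ u = .a (βf α) y₂ ∧ gf α y₁ = y₂

/-- `f` is an automorphism of the restriction of the expansion `M_p` to `S`. -/
structure IsAutP (βf : Ordinal → Ordinal) (gf : Ordinal → (G →+ G))
    (S : Set MU) (f : MU → MU) extends IsAut S f : Prop where
  r1 : ∀ u ∈ S, ∀ v ∈ S, (R1 βf gf (f u) (f v) ↔ R1 βf gf u v)
/-- `p` is a partial isomorphism of the restriction of the expansion `M_p`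
(with the extra relation `R₁`) to `S`. -/
def PartIsoP (βf : Ordinal → Ordinal) (gf : Ordinal → (G →+ G))
    (S : Set MU) (p : Set (MU × MU)) : Prop :=
  (∀ q ∈ p, q.1 ∈ S ∧ q.2 ∈ S) ∧
  (∀ q ∈ p, ∀ q' ∈ p, (q.1 = q'.1 ↔ q.2 = q'.2)) ∧
  (∀ q ∈ p, (isA q.1 ↔ isA q.2)) ∧
  (∀ q ∈ p, ∀ q' ∈ p, (E1 q.1 q'.1 ↔ E1 q.2 q'.2)) ∧
  (∀ q ∈ p, ∀ q' ∈ p, (E2 q.1 q'.1 ↔ E2 q.2 q'.2)) ∧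
  (∀ q ∈ p, ∀ q' ∈ p, ∀ y : G, (q'.1 = Fy y q.1 ↔ q'.2 = Fy y q.2)) ∧
  (∀ q ∈ p, ∀ q' ∈ p, (Rmem q.1 q'.1 ↔ Rmem q.2 q'.2)) ∧
  (∀ q ∈ p, ∀ q' ∈ p, (R1 βf gf q.1 q'.1 ↔ R1 βf gf q.2 q'.2))

/-- The isomorphism player has a winning strategy in the Ehrenfeucht–Fraïssé
game of length `ζ` on the pointed structures `(M_p ↾ S, a₁)`, `(M_p ↾ S, a₂)`:
a strategy produces, depending only on the adversary's earlier moves, an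
increasing continuous chain of partial isomorphisms starting with `{(a₁,a₂)}`
and covering each element chosen by the adversary in the preceding round. -/
def ISOWinsP (βf : Ordinal → Ordinal) (gf : Ordinal → (G →+ G))
    (S : Set MU) (a₁ a₂ : MU) (ζ : Ordinal) : Prop :=
  ∃ σ : Ordinal → (Ordinal → Bool × MU) → Set (MU × MU),
    (∀ ε mv mv', (∀ δ < ε, mv δ = mv' δ) → σ ε mv = σ ε mv') ∧
    ∀ mv : Ordinal → Bool × MU, (∀ δ < ζ, (mv δ).2 ∈ S) →
      σ 0 mv = {(a₁, a₂)} ∧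
      (∀ ε ≤ ζ, PartIsoP βf gf S (σ ε mv)) ∧
      (∀ ε ε', ε ≤ ε' → ε' ≤ ζ → σ ε mv ⊆ σ ε' mv) ∧
      (∀ ε ≤ ζ, Order.IsSuccLimit ε → σ ε mv = ⋃ ξ < ε, σ ξ mv) ∧
      (∀ ε < ζ, if (mv ε).1 then ∃ d, ((mv ε).2, d) ∈ σ (ε + 1) mv
                else ∃ c, (c, (mv ε).2) ∈ σ (ε + 1) mv)
/-! ### Basic lemmas about `G` -/

lemma g_add_self (y : G) : y + y = 0 := by
  ext n
  simp only [Finsupp.add_apply, Finsupp.coe_zero, Pi.zero_apply]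
  revert y; intro y; generalize y n = v; revert v; decide

lemma g_add_cancel (y z : G) : y + (y + z) = z := by
  rw [← add_assoc, g_add_self, zero_add]

/-- The "level set" description of the cosets. -/
def lvl (n : ℕ) (c : ZMod 2) : Set G := {y : G | y n = c}

lemma xg_apply_self (n : ℕ) : (xg n) n = 1 := by simp [xg]

lemma xg_apply_ne {n m : ℕ} (h : m ≠ n) : (xg n) m = 0 := by
  simp [xg, Finsupp.single_apply, Ne.symm h]

lemma G0_eq (n : ℕ) : G0 n = lvl n 0 := by
  apply subset_antisymm
  · intro y hy
    have : (Submodule.span (ZMod 2) {y : G | ∃ k : ℕ, k ≠ n ∧ y = xg k}) ≤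
        LinearMap.ker (Finsupp.lapply (M := ZMod 2) (R := ZMod 2) n) := by
      rw [Submodule.span_le]
      rintro z ⟨k, hk, rfl⟩
      simp [LinearMap.mem_ker, Finsupp.lapply, xg, Finsupp.single_apply, hk]
    have := this hy
    simpa [LinearMap.mem_ker, Finsupp.lapply, lvl] using this
  · intro y (hy : y n = 0)
    have hrep : y = ∑ k ∈ y.support, Finsupp.single k (y k) := by
      conv_lhs => rw [← Finsupp.sum_single y]
      rfl
    rw [G0]
    simp only [SetLike.mem_coe]
    rw [hrep]
    apply Submodule.sum_mem
    intro k hk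
    apply Submodule.subset_span
    have hkn : k ≠ n := by
      rintro rfl
      exact (Finsupp.mem_support_iff.1 hk) hy
    have h1 : y k = 1 := by
      have := Finsupp.mem_support_iff.1 hk
      revert this; generalize y k = v; revert v; decide
    exact ⟨k, hkn, by rw [h1]; rfl⟩

lemma image_lvl (g : G) (n : ℕ) (c : ZMod 2) :
    (fun z => g + z) '' lvl n c = lvl n (g n + c) := by
  ext y
  constructor
  · rintro ⟨z, hz, rfl⟩
    simp only [lvl, mem_setOf_eq, Finsupp.add_apply] at hz ⊢
    rw [hz]
  · intro hy
    refine ⟨g + y, ?_, g_add_cancel g y⟩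
    simp only [lvl, mem_setOf_eq, Finsupp.add_apply] at hy ⊢
    rw [hy, ← add_assoc]
    have : g n + g n = 0 := by generalize g n = v; revert v; decide
    rw [this, zero_add]

lemma G1_eq (n : ℕ) : G1 n = lvl n 1 := by
  rw [G1, G0_eq, image_lvl, xg_apply_self, add_zero]

lemma mem_Gfam_iff {T : Set G} : T ∈ Gfam ↔ ∃ n c, T = lvl n c := by
  constructor
  · rintro ⟨n, (rfl | rfl)⟩
    exacts [⟨n, 0, G0_eq n⟩, ⟨n, 1, G1_eq n⟩]
  · rintro ⟨n, c, rfl⟩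
    refine ⟨n, ?_⟩
    have : c = 0 ∨ c = 1 := by revert c; decide
    rcases this with rfl | rfl
    · exact Or.inl (G0_eq n).symm
    · exact Or.inr (G1_eq n).symm

lemma lvl_subset {n m : ℕ} {c d : ZMod 2} (h : lvl n c ⊆ lvl m d) : n = m ∧ c = d := by
  by_cases hnm : n = m
  · subst hnm
    refine ⟨rfl, ?_⟩
    have hm : (c • xg n : G) ∈ lvl n c := by
      show (c • xg n : G) n = c
      rw [Finsupp.smul_apply, xg_apply_self, smul_eq_mul, mul_one]
    have h3 := h hm
    simp only [lvl, Set.mem_setOf_eq, Finsupp.smul_apply] at h3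
    rw [xg_apply_self, smul_eq_mul, mul_one] at h3
    exact h3
  · exfalso
    have hy : (c • xg n + (d + 1) • xg m : G) ∈ lvl n c := by
      show (c • xg n + (d + 1) • xg m : G) n = c
      rw [Finsupp.add_apply, Finsupp.smul_apply, Finsupp.smul_apply, xg_apply_self,
        xg_apply_ne hnm, smul_zero, add_zero, smul_eq_mul, mul_one]
    have h3 := h hy
    simp only [lvl, Set.mem_setOf_eq, Finsupp.add_apply, Finsupp.smul_apply] at h3
    rw [xg_apply_self, xg_apply_ne (fun hh => hnm hh.symm), smul_zero, zero_add,
      smul_eq_mul, mul_one] at h3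
    revert h3; generalize d = v; revert v; decide

lemma lvl_inj {n m : ℕ} {c d : ZMod 2} (h : lvl n c = lvl m d) : n = m ∧ c = d :=
  lvl_subset h.le

lemma transl_Gfam {T : Set G} (g : G) (hT : T ∈ Gfam) : (fun z => g + z) '' T ∈ Gfam := by
  rw [mem_Gfam_iff] at hT ⊢
  obtain ⟨n, c, rfl⟩ := hT
  exact ⟨n, g n + c, image_lvl g n c⟩

lemma lvl_G0_of_apply_zero {g : G} {n : ℕ} (hg : g n = 0) :
    (fun z => g + z) '' G0 n = G0 n := by
  rw [G0_eq, image_lvl, hg, zero_add]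

/-- `H` of a basic pair is `x₀ + x₁`. -/
lemma H_pair (h : ℕ → ℕ) (hh : ∀ n l : ℕ, l < 2 → h (2 * n + l) = l)
    (H : G →+ G) (hH : ∀ u : Finset ℕ, H (∑ n ∈ u, xg n) = ∑ n ∈ u, xg (h n)) (k : ℕ) :
    H (xg (2 * k) + xg (2 * k + 1)) = xg 0 + xg 1 := by
  have hne : 2 * k ≠ 2 * k + 1 := by omega
  have := hH {2 * k, 2 * k + 1}
  rw [Finset.sum_pair hne, Finset.sum_pair hne] at this
  rw [this]
  have h0 : h (2 * k) = 0 := by simpa using hh k 0 (by norm_num)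
  have h1 : h (2 * k + 1) = 1 := hh k 1 (by norm_num)
  rw [h0, h1]

/-! ### Lemmas about `fnu` -/

/-- A translation family is *nice* when each coordinate is touched only finitely often. -/
def Nice (ν : Ordinal → G) : Prop := ∀ n : ℕ, {β : Ordinal | ν β n ≠ 0}.Finite

lemma idx_fnu (ν : Ordinal → G) (u : MU) : idx (fnu ν u) = idx u := by
  cases u <;> rfl

lemma isA_fnu (ν : Ordinal → G) (u : MU) : isA (fnu ν u) ↔ isA u := by
  cases u <;> rfl

lemma fnu_fnu (ν : Ordinal → G) (u : MU) : fnu ν (fnu ν u) = u := by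
  cases u with
  | a α g => show MU.a α (g + ν α + ν α) = MU.a α g
             rw [add_assoc, g_add_self, add_zero]
  | b α η =>
    show MU.b α _ = MU.b α η
    congr 1
    funext β
    rw [Set.image_image]
    have : (fun z => ν β + (ν β + z)) = fun z => z := by
      funext z; exact g_add_cancel _ _
    rw [this, Set.image_id']

lemma fnu_inj (ν : Ordinal → G) {u v : MU} (h : fnu ν u = fnu ν v) : u = v := by
  have := congrArg (fnu ν) h
  rwa [fnu_fnu, fnu_fnu] at this

lemma fnu_Fy (ν : Ordinal → G) (y : G) (u : MU) : fnu ν (Fy y u) = Fy y (fnu ν u) := by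
  cases u with
  | a α g => show MU.a α (g + y + ν α) = MU.a α (g + ν α + y)
             rw [add_assoc, add_assoc, add_comm y]
  | b α η => rfl

lemma fnu_mem {ν : Ordinal → G} (hν : Nice ν) {γ : Ordinal} {u : MU}
    (hu : u ∈ MUuniv γ) : fnu ν u ∈ MUuniv γ := by
  cases u with
  | a α g => exact hu
  | b α η =>
    obtain ⟨hα, h1, h2, n, hn⟩ := hu
    refine ⟨hα, ?_, ?_, n, ?_⟩
    · intro β hβ
      exact transl_Gfam _ (h1 β hβ)
    · intro β hβ
      show (fun z => ν β + z) '' η β = ∅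
      rw [h2 β hβ, Set.image_empty]
    · apply Set.Finite.subset ((hn.union (hν n)))
      intro β hβ
      obtain ⟨hβα, hne⟩ := hβ
      by_cases hG : η β = G0 n
      · right
        intro h0
        apply hne
        show (fun z => ν β + z) '' η β = G0 n
        rw [hG, lvl_G0_of_apply_zero h0]
      · exact Or.inl ⟨hβα, hG⟩

lemma Rmem_fnu_of (ν : Ordinal → G) {u v : MU} (h : Rmem u v) : Rmem (fnu ν u) (fnu ν v) := by
  obtain ⟨β, η, α, g, rfl, rfl, hαβ, hg⟩ := h
  exact ⟨β, _, α, g + ν α, rfl, rfl, hαβ, ⟨g, hg, by rw [add_comm]⟩⟩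

lemma Rmem_fnu (ν : Ordinal → G) (u v : MU) : Rmem (fnu ν u) (fnu ν v) ↔ Rmem u v := by
  constructor
  · intro h
    have := Rmem_fnu_of ν h
    rwa [fnu_fnu, fnu_fnu] at this
  · exact Rmem_fnu_of ν

lemma E1_fnu (ν : Ordinal → G) (u v : MU) : E1 (fnu ν u) (fnu ν v) ↔ E1 u v := by
  unfold E1
  rw [isA_fnu, isA_fnu, idx_fnu, idx_fnu]

lemma E2_fnu (ν : Ordinal → G) (u v : MU) : E2 (fnu ν u) (fnu ν v) ↔ E2 u v := by
  unfold E2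
  rw [isA_fnu, isA_fnu, idx_fnu, idx_fnu]

lemma R1_fnu_of {H : G →+ G} {ν : Ordinal → G} (hν0 : ν 0 = xg 0 + xg 1)
    {u v : MU} (hv : H (ν (idx v)) = xg 0 + xg 1)
    (h : R1 (fun _ => 0) (fun _ => H) u v) :
    R1 (fun _ => 0) (fun _ => H) (fnu ν u) (fnu ν v) := by
  obtain ⟨α, y₁, y₂, hα, rfl, rfl, hHy⟩ := h
  refine ⟨α, y₁ + ν α, y₂ + ν 0, hα, rfl, rfl, ?_⟩
  rw [map_add, hHy, hν0]
  have : idx (MU.a α y₁) = α := rfl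
  rw [this] at hv
  rw [hv]

lemma R1_fnu {H : G →+ G} {ν : Ordinal → G} (hν0 : ν 0 = xg 0 + xg 1)
    {u v : MU} (hv : H (ν (idx v)) = xg 0 + xg 1) :
    R1 (fun _ => 0) (fun _ => H) (fnu ν u) (fnu ν v) ↔ R1 (fun _ => 0) (fun _ => H) u v := by
  constructor
  · intro h
    have hv' : H (ν (idx (fnu ν v))) = xg 0 + xg 1 := by rwa [idx_fnu]
    have := R1_fnu_of hν0 hv' h
    rwa [fnu_fnu, fnu_fnu] at this
  · exact R1_fnu_of hν0 hv

lemma fnu_congr {ν ν' : Ordinal → G} {γ : Ordinal} {u : MU} (hu : u ∈ MUuniv γ)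
    (h : ∀ β ≤ idx u, ν β = ν' β) : fnu ν u = fnu ν' u := by
  cases u with
  | a α g =>
    show MU.a α (g + ν α) = MU.a α (g + ν' α)
    rw [h α le_rfl]
  | b α η =>
    obtain ⟨-, -, h2, -⟩ := hu
    show MU.b α _ = MU.b α _
    congr 1
    funext β
    by_cases hβ : β < α
    · rw [h β hβ.le]
    · show (fun z => ν β + z) '' η β = (fun z => ν' β + z) '' η β
      rw [h2 β hβ, Set.image_empty, Set.image_empty]

/-- The generic partial isomorphism built from `fnu ν` on a domain `D`. -/
lemma partIso_graph {H : G →+ G} {ν : Ordinal → G} {D : Set MU}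
    (hD : D ⊆ MUuniv omega1) (hν0 : ν 0 = xg 0 + xg 1) (hνn : Nice ν)
    (hνH : ∀ u ∈ D, H (ν (idx u)) = xg 0 + xg 1) :
    PartIsoP (fun _ => 0) (fun _ => H) (MUuniv omega1)
      ((fun u => (u, fnu ν u)) '' D) := by
  refine ⟨?_, ?_, ?_, ?_, ?_, ?_, ?_, ?_⟩
  · rintro q ⟨u, hu, rfl⟩
    exact ⟨hD hu, fnu_mem hνn (hD hu)⟩
  · rintro q ⟨u, hu, rfl⟩ q' ⟨u', hu', rfl⟩
    dsimp only
    exact ⟨fun hh => by rw [hh], fun hh => fnu_inj ν hh⟩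
  · rintro q ⟨u, hu, rfl⟩
    dsimp only
    exact (isA_fnu ν u).symm
  · rintro q ⟨u, hu, rfl⟩ q' ⟨u', hu', rfl⟩
    dsimp only
    exact (E1_fnu ν u u').symm
  · rintro q ⟨u, hu, rfl⟩ q' ⟨u', hu', rfl⟩
    dsimp only
    exact (E2_fnu ν u u').symm
  · rintro q ⟨u, hu, rfl⟩ q' ⟨u', hu', rfl⟩ y
    dsimp only
    constructor
    · rintro rfl
      exact fnu_Fy ν y u
    · intro hh
      apply fnu_inj ν
      rw [hh, fnu_Fy]
  · rintro q ⟨u, hu, rfl⟩ q' ⟨u', hu', rfl⟩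
    dsimp only
    exact (Rmem_fnu ν u u').symm
  · rintro q ⟨u, hu, rfl⟩ q' ⟨u', hu', rfl⟩
    dsimp only
    exact (R1_fnu hν0 (hνH u' hu')).symm

/-! ### Countability helpers -/

universe u

lemma idx_lt_of_mem {γ : Ordinal.{0}} {u : MU} (hu : u ∈ MUuniv γ) : idx u < γ := by
  cases u with
  | a α g => exact hu
  | b α η => exact hu.1

lemma omega1_pos : (0 : Ordinal) < omega1 := by
  rw [omega1, Cardinal.lt_ord, Ordinal.card_zero]
  exact lt_of_lt_of_le Cardinal.aleph0_pos (Cardinal.aleph0_le_aleph 1)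

lemma a0x0_mem : (MU.a 0 (xg 0)) ∈ MUuniv omega1 := omega1_pos

lemma succ_lt_omega1 {o : Ordinal.{u}} (ho : o < omega1) : o + 1 < omega1 := by
  rw [omega1, Cardinal.lt_ord] at ho ⊢
  rw [Ordinal.add_one_eq_succ, Ordinal.card_succ]
  exact Cardinal.add_lt_of_lt (Cardinal.aleph0_le_aleph 1) ho
    (lt_trans Cardinal.one_lt_aleph0 Cardinal.aleph0_lt_aleph_one)

lemma lt_omega1_countable {o : Ordinal.{u}} (ho : o < omega1) :
    ∃ f : Ordinal.{u} → ℕ, Set.InjOn f (Set.Iio o) := by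
  have hcard : o.card < Cardinal.aleph 1 := Cardinal.lt_ord.1 ho
  rw [← Cardinal.succ_aleph0] at hcard
  have hle : o.card ≤ Cardinal.aleph0 := Order.lt_succ_iff.1 hcard
  have hmk : Cardinal.mk (Set.Iio o) ≤ Cardinal.aleph0 := by
    rw [Ordinal.mk_Iio_ordinal]
    calc Cardinal.lift.{u+1} o.card ≤ Cardinal.lift.{u+1} Cardinal.aleph0 :=
          Cardinal.lift_le.2 hle
      _ = Cardinal.aleph0 := Cardinal.lift_aleph0
  have : Countable (Set.Iio o) := Cardinal.mk_le_aleph0_iff.1 hmk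
  obtain ⟨f0, hf0⟩ := exists_injective_nat (Set.Iio o)
  refine ⟨fun β => if h : β < o then f0 ⟨β, h⟩ else 0, ?_⟩
  intro β hβ β' hβ' hfe
  simp only [Set.mem_Iio] at hβ hβ'
  dsimp only at hfe
  rw [dif_pos hβ, dif_pos hβ'] at hfe
  exact Subtype.mk_eq_mk.1 (hf0 hfe)

lemma exists_JJ : ∃ J : Ordinal.{0} → Ordinal.{0} → ℕ,
    ∀ o < omega1, Set.InjOn (J o) (Set.Iic o) := by
  refine ⟨fun o => if h : o < omega1 then (lt_omega1_countable (succ_lt_omega1 h)).choose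
    else fun _ => 0, ?_⟩
  intro o ho
  dsimp only
  rw [dif_pos ho]
  have hinj := (lt_omega1_countable (succ_lt_omega1 ho)).choose_spec
  refine hinj.mono ?_
  intro β hβ
  rw [Set.mem_Iio, Ordinal.add_one_eq_succ, Order.lt_succ_iff]
  exact hβ

/-! ### The strategy -/

def pairG (k : ℕ) : G := xg (2 * k) + xg (2 * k + 1)

lemma pairG_zero : pairG 0 = xg 0 + xg 1 := by
  show xg (2 * 0) + xg (2 * 0 + 1) = xg 0 + xg 1
  norm_num

lemma pairG_apply_ne {k n : ℕ} (h1 : n ≠ 2 * k) (h2 : n ≠ 2 * k + 1) : (pairG k) n = 0 := by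
  show (xg (2 * k) + xg (2 * k + 1)) n = 0
  rw [Finsupp.add_apply, xg_apply_ne h1, xg_apply_ne h2, add_zero]

section Strategy

variable (E : Ordinal.{u} → ℕ) (J : Ordinal.{0} → Ordinal.{0} → ℕ) (mv : Ordinal.{u} → Bool × MU)

/-- `β` is "covered" by the moves before round `ε`. -/
def covers (ε : Ordinal.{u}) (β : Ordinal.{0}) : Prop := β = 0 ∨ ∃ δ, δ < ε ∧ β ≤ idx (mv δ).2

open scoped Classical in
/-- The index of the pair assigned to `β` at stage `ε`. -/
def kf (ε : Ordinal.{u}) (β : Ordinal.{0}) : ℕ :=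
  if β = 0 then 0
  else if h : ∃ δ, δ < ε ∧ β ≤ idx (mv δ).2 then
    Nat.pair (E (sInf {δ | δ < ε ∧ β ≤ idx (mv δ).2}))
      (J (idx (mv (sInf {δ | δ < ε ∧ β ≤ idx (mv δ).2})).2) β) + 1
  else 0

open scoped Classical in
/-- The translation family at stage `ε`. -/
def nuf (ε : Ordinal.{u}) : Ordinal.{0} → G :=
  fun β => if covers mv ε β then pairG (kf E J mv ε β) else 0

/-- The element covered at round `δ`. -/
def pick (δ : Ordinal.{u}) : MU :=
  if (mv δ).1 then (mv δ).2 else fnu (nuf E J mv (δ + 1)) (mv δ).2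

/-- The domain of the partial isomorphism at stage `ε`. -/
def Dset (ε : Ordinal.{u}) : Set MU :=
  insert (MU.a 0 (xg 0)) {u | ∃ δ, δ < ε ∧ u = pick E J mv δ}

/-- The partial isomorphism at stage `ε`. -/
def sig (ε : Ordinal.{u}) : Set (MU × MU) :=
  (fun u => (u, fnu (nuf E J mv ε) u)) '' Dset E J mv ε

variable {E J mv}

lemma covers_mono {ε ε' : Ordinal.{u}} {β : Ordinal.{0}} (h : ε ≤ ε') (hc : covers mv ε β) :
    covers mv ε' β := by
  rcases hc with h0 | ⟨δ, h1, h2⟩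
  · exact Or.inl h0
  · exact Or.inr ⟨δ, lt_of_lt_of_le h1 h, h2⟩

lemma covers_dc {ε : Ordinal.{u}} {β β' : Ordinal.{0}} (h : β' ≤ β) (hc : covers mv ε β) :
    covers mv ε β' := by
  rcases hc with h0 | ⟨δ, h1, h2⟩
  · exact Or.inl (le_antisymm (h0 ▸ h) (zero_le (a := β')))
  · exact Or.inr ⟨δ, h1, le_trans h h2⟩

lemma covers_zero (ε : Ordinal.{u}) : covers mv ε 0 := Or.inl rfl

lemma kf_zero (ε : Ordinal.{u}) : kf E J mv ε 0 = 0 := by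
  rw [kf, if_pos rfl]

lemma nuf_zero (ε : Ordinal.{u}) : nuf E J mv ε 0 = xg 0 + xg 1 := by
  rw [nuf]
  simp only [if_pos (covers_zero ε), kf_zero, pairG_zero]

lemma kf_stable {ε ε' : Ordinal.{u}} {β : Ordinal.{0}} (h : ε ≤ ε') (hc : covers mv ε β) :
    kf E J mv ε' β = kf E J mv ε β := by
  by_cases hβ0 : β = 0
  · rw [kf, kf, if_pos hβ0, if_pos hβ0]
  · obtain ⟨δ, h1, h2⟩ := hc.resolve_left hβ0
    have hex : ∃ δ, δ < ε ∧ β ≤ idx (mv δ).2 := ⟨δ, h1, h2⟩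
    have hex' : ∃ δ, δ < ε' ∧ β ≤ idx (mv δ).2 := ⟨δ, lt_of_lt_of_le h1 h, h2⟩
    have hne : {δ | δ < ε ∧ β ≤ idx (mv δ).2}.Nonempty := hex
    have hne' : {δ | δ < ε' ∧ β ≤ idx (mv δ).2}.Nonempty := hex'
    have hsub : {δ | δ < ε ∧ β ≤ idx (mv δ).2} ⊆ {δ | δ < ε' ∧ β ≤ idx (mv δ).2} :=
      fun δ' hδ' => ⟨lt_of_lt_of_le hδ'.1 h, hδ'.2⟩
    have hmem := csInf_mem hne
    have hmem' := csInf_mem hne'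
    have hle1 : sInf {δ | δ < ε' ∧ β ≤ idx (mv δ).2} ≤ sInf {δ | δ < ε ∧ β ≤ idx (mv δ).2} :=
      csInf_le' (hsub hmem)
    have hlt : sInf {δ | δ < ε' ∧ β ≤ idx (mv δ).2} < ε := lt_of_le_of_lt hle1 hmem.1
    have hle2 : sInf {δ | δ < ε ∧ β ≤ idx (mv δ).2} ≤ sInf {δ | δ < ε' ∧ β ≤ idx (mv δ).2} :=
      csInf_le' (⟨hlt, hmem'.2⟩ : _ ∈ {δ | δ < ε ∧ β ≤ idx (mv δ).2})
    have heq : sInf {δ | δ < ε' ∧ β ≤ idx (mv δ).2} = sInf {δ | δ < ε ∧ β ≤ idx (mv δ).2} :=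
      le_antisymm hle1 hle2
    rw [kf, kf, if_neg hβ0, if_neg hβ0, dif_pos hex, dif_pos hex', heq]

lemma nuf_stable {ε ε' : Ordinal.{u}} {β : Ordinal.{0}} (h : ε ≤ ε') (hc : covers mv ε β) :
    nuf E J mv ε' β = nuf E J mv ε β := by
  rw [nuf, nuf, if_pos hc, if_pos (covers_mono h hc), kf_stable h hc]

end Strategy

section Strategy2



variable {E : Ordinal.{u} → ℕ} {J : Ordinal.{0} → Ordinal.{0} → ℕ}
  {mv : Ordinal.{u} → Bool × MU} {ζ : Ordinal.{u}}

/-- Hypotheses on the auxiliary data. -/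
structure StratHyp (E : Ordinal.{u} → ℕ) (J : Ordinal.{0} → Ordinal.{0} → ℕ)
    (mv : Ordinal.{u} → Bool × MU) (ζ : Ordinal.{u}) : Prop where
  hE : Set.InjOn E (Set.Iio ζ)
  hJ : ∀ o < omega1, Set.InjOn (J o) (Set.Iic o)
  hmv : ∀ δ < ζ, (mv δ).2 ∈ MUuniv omega1

lemma kf_inj (h : StratHyp E J mv ζ) {ε : Ordinal.{u}} (hε : ε ≤ ζ) {β β' : Ordinal.{0}}
    (hc : covers mv ε β) (hc' : covers mv ε β')
    (he : kf E J mv ε β = kf E J mv ε β') : β = β' := by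
  by_cases h0 : β = 0 <;> by_cases h0' : β' = 0
  · rw [h0, h0']
  · exfalso
    obtain ⟨δ, h1, h2⟩ := hc'.resolve_left h0'
    rw [kf, if_pos h0, kf, if_neg h0', dif_pos ⟨δ, h1, h2⟩] at he
    exact Nat.succ_ne_zero _ he.symm
  · exfalso
    obtain ⟨δ, h1, h2⟩ := hc.resolve_left h0
    rw [kf, if_neg h0, kf, if_pos h0', dif_pos ⟨δ, h1, h2⟩] at he
    exact Nat.succ_ne_zero _ he
  · obtain ⟨δ, h1, h2⟩ := hc.resolve_left h0
    obtain ⟨δ', h1', h2'⟩ := hc'.resolve_left h0'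
    rw [kf, if_neg h0, dif_pos ⟨δ, h1, h2⟩, kf, if_neg h0', dif_pos ⟨δ', h1', h2'⟩] at he
    have he2 := Nat.pair_eq_pair.1 (Nat.succ_injective he)
    set δ0 := sInf {δ | δ < ε ∧ β ≤ idx (mv δ).2} with hδ0
    set δ0' := sInf {δ | δ < ε ∧ β' ≤ idx (mv δ).2} with hδ0'
    have hmem : δ0 ∈ {δ | δ < ε ∧ β ≤ idx (mv δ).2} := csInf_mem ⟨δ, h1, h2⟩
    have hmem' : δ0' ∈ {δ | δ < ε ∧ β' ≤ idx (mv δ).2} := csInf_mem ⟨δ', h1', h2'⟩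
    have hδeq : δ0 = δ0' :=
      h.hE (lt_of_lt_of_le hmem.1 hε) (lt_of_lt_of_le hmem'.1 hε) he2.1
    have hidx : idx (mv δ0).2 < omega1 :=
      idx_lt_of_mem (h.hmv δ0 (lt_of_lt_of_le hmem.1 hε))
    apply h.hJ (idx (mv δ0).2) hidx hmem.2 (hδeq ▸ hmem'.2)
    rw [← hδeq] at he2
    exact he2.2

lemma nuf_nice (h : StratHyp E J mv ζ) {ε : Ordinal.{u}} (hε : ε ≤ ζ) :
    Nice (nuf E J mv ε) := by
  intro n
  have hsub : {β : Ordinal | nuf E J mv ε β n ≠ 0} ⊆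
      {β : Ordinal | covers mv ε β ∧ (2 * kf E J mv ε β = n ∨ 2 * kf E J mv ε β + 1 = n)} := by
    intro β hβ
    simp only [Set.mem_setOf_eq] at hβ ⊢
    rw [nuf] at hβ
    by_cases hc : covers mv ε β
    · rw [if_pos hc] at hβ
      refine ⟨hc, ?_⟩
      by_contra hcon
      push_neg at hcon
      exact hβ (pairG_apply_ne (fun hh => hcon.1 hh.symm) (fun hh => hcon.2 hh.symm))
    · rw [if_neg hc] at hβ
      exact absurd rfl hβ
  apply Set.Finite.subset _ hsub
  apply Set.Finite.of_finite_image (f := kf E J mv ε)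
  · apply Set.Finite.subset (Set.finite_Iic n)
    rintro m ⟨β, hβ, rfl⟩
    simp only [Set.mem_Iic]
    rcases hβ.2 with h2 | h2 <;> omega
  · intro β hβ β' hβ' he
    exact kf_inj h hε hβ.1 hβ'.1 he

lemma H_nuf (h' : ℕ → ℕ) (hh : ∀ n l : ℕ, l < 2 → h' (2 * n + l) = l)
    (H : G →+ G) (hH : ∀ u : Finset ℕ, H (∑ n ∈ u, xg n) = ∑ n ∈ u, xg (h' n))
    {ε : Ordinal.{u}} {β : Ordinal.{0}} (hc : covers mv ε β) :
    H (nuf E J mv ε β) = xg 0 + xg 1 := by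
  rw [nuf, if_pos hc]
  exact H_pair h' hh H hH _

lemma idx_pick (δ : Ordinal.{u}) : idx (pick E J mv δ) = idx (mv δ).2 := by
  rw [pick]
  split
  · rfl
  · rw [idx_fnu]

lemma pick_mem (h : StratHyp E J mv ζ) {δ : Ordinal.{u}} (hδ : δ < ζ) :
    pick E J mv δ ∈ MUuniv omega1 := by
  rw [pick]
  split
  · exact h.hmv δ hδ
  · exact fnu_mem (nuf_nice h (by rw [Ordinal.add_one_eq_succ]; exact Order.succ_le_of_lt hδ))
      (h.hmv δ hδ)

lemma Dset_subset (h : StratHyp E J mv ζ) {ε : Ordinal.{u}} (hε : ε ≤ ζ) :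
    Dset E J mv ε ⊆ MUuniv omega1 := by
  rintro u (rfl | ⟨δ, hδ, rfl⟩)
  · exact a0x0_mem
  · exact pick_mem h (lt_of_lt_of_le hδ hε)

lemma covers_idx_Dset {ε : Ordinal.{u}} {u : MU} (hu : u ∈ Dset E J mv ε) :
    covers mv ε (idx u) := by
  rcases hu with rfl | ⟨δ, hδ, rfl⟩
  · exact Or.inl rfl
  · exact Or.inr ⟨δ, hδ, by rw [idx_pick]⟩

/-- Stability of the graph pairs. -/
lemma fnu_nuf_stable (h : StratHyp E J mv ζ) {ξ ε : Ordinal.{u}} (hξ : ξ ≤ ε) (hε : ε ≤ ζ)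
    {u : MU} (hu : u ∈ Dset E J mv ξ) :
    fnu (nuf E J mv ε) u = fnu (nuf E J mv ξ) u := by
  apply fnu_congr (Dset_subset h (le_trans hξ hε) hu)
  intro β hβ
  exact nuf_stable hξ (covers_dc hβ (covers_idx_Dset hu))

lemma Dset_mono {ξ ε : Ordinal.{u}} (hξ : ξ ≤ ε) : Dset E J mv ξ ⊆ Dset E J mv ε := by
  rintro u (rfl | ⟨δ, hδ, rfl⟩)
  · exact Or.inl rfl
  · exact Or.inr ⟨δ, lt_of_lt_of_le hδ hξ, rfl⟩

lemma sig_mono (h : StratHyp E J mv ζ) {ξ ε : Ordinal.{u}} (hξ : ξ ≤ ε) (hε : ε ≤ ζ) :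
    sig E J mv ξ ⊆ sig E J mv ε := by
  rintro q ⟨u, hu, rfl⟩
  refine ⟨u, Dset_mono hξ hu, ?_⟩
  dsimp only
  rw [fnu_nuf_stable h hξ hε hu]

end Strategy2

section Congr



variable {E : Ordinal.{u} → ℕ} {J : Ordinal.{0} → Ordinal.{0} → ℕ}
  {mv mv' : Ordinal.{u} → Bool × MU} {ε : Ordinal.{u}}

lemma set_congr (hag : ∀ δ < ε, mv δ = mv' δ) (β : Ordinal.{0}) :
    {δ | δ < ε ∧ β ≤ idx (mv δ).2} = {δ | δ < ε ∧ β ≤ idx (mv' δ).2} := by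
  ext δ
  simp only [Set.mem_setOf_eq]
  constructor
  · rintro ⟨h1, h2⟩
    exact ⟨h1, by rw [← hag δ h1]; exact h2⟩
  · rintro ⟨h1, h2⟩
    exact ⟨h1, by rw [hag δ h1]; exact h2⟩

lemma covers_congr (hag : ∀ δ < ε, mv δ = mv' δ) {β : Ordinal.{0}} :
    covers mv ε β ↔ covers mv' ε β := by
  unfold covers
  constructor
  · rintro (h0 | ⟨δ, h1, h2⟩)
    · exact Or.inl h0
    · exact Or.inr ⟨δ, h1, by rw [← hag δ h1]; exact h2⟩
  · rintro (h0 | ⟨δ, h1, h2⟩)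
    · exact Or.inl h0
    · exact Or.inr ⟨δ, h1, by rw [hag δ h1]; exact h2⟩

lemma kf_congr (hag : ∀ δ < ε, mv δ = mv' δ) (β : Ordinal.{0}) :
    kf E J mv ε β = kf E J mv' ε β := by
  have hset := set_congr hag β
  by_cases h0 : β = 0
  · rw [kf, kf, if_pos h0, if_pos h0]
  · rw [kf, kf, if_neg h0, if_neg h0]
    by_cases hex : ∃ δ, δ < ε ∧ β ≤ idx (mv δ).2
    · have hex' : ∃ δ, δ < ε ∧ β ≤ idx (mv' δ).2 := by
        obtain ⟨δ, hd⟩ := hex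
        exact ⟨δ, (Set.ext_iff.1 hset δ).1 hd⟩
      rw [dif_pos hex, dif_pos hex', ← hset]
      have hlt : sInf {δ | δ < ε ∧ β ≤ idx (mv δ).2} < ε := (csInf_mem hex).1
      rw [hag _ hlt]
    · have hex' : ¬ ∃ δ, δ < ε ∧ β ≤ idx (mv' δ).2 := by
        intro hcon
        obtain ⟨δ, hd⟩ := hcon
        exact hex ⟨δ, (Set.ext_iff.1 hset δ).2 hd⟩
      rw [dif_neg hex, dif_neg hex']

lemma nuf_congr (hag : ∀ δ < ε, mv δ = mv' δ) : nuf E J mv ε = nuf E J mv' ε := by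
  funext β
  rw [nuf, nuf]
  by_cases hc : covers mv ε β
  · rw [if_pos hc, if_pos ((covers_congr hag).1 hc), kf_congr hag]
  · rw [if_neg hc, if_neg (fun hc' => hc ((covers_congr hag).2 hc'))]

lemma pick_congr (hag : ∀ δ < ε, mv δ = mv' δ) {δ : Ordinal.{u}} (hδ : δ < ε) :
    pick E J mv δ = pick E J mv' δ := by
  have hag' : ∀ δ' < δ + 1, mv δ' = mv' δ' := by
    intro δ' hδ'
    rw [Ordinal.add_one_eq_succ, Order.lt_succ_iff] at hδ'
    exact hag δ' (lt_of_le_of_lt hδ' hδ)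
  rw [pick, pick, hag δ hδ, nuf_congr hag']

lemma Dset_congr (hag : ∀ δ < ε, mv δ = mv' δ) : Dset E J mv ε = Dset E J mv' ε := by
  unfold Dset
  congr 1
  ext u
  constructor
  · rintro ⟨δ, hδ, rfl⟩
    exact ⟨δ, hδ, pick_congr hag hδ⟩
  · rintro ⟨δ, hδ, rfl⟩
    exact ⟨δ, hδ, (pick_congr hag hδ).symm⟩

lemma sig_congr (hag : ∀ δ < ε, mv δ = mv' δ) : sig E J mv ε = sig E J mv' ε := by
  rw [sig, sig, Dset_congr hag, nuf_congr hag]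

end Congr

/-- Part 1: the isomorphism player wins every game of countable length. -/
lemma part1 (h' : ℕ → ℕ) (hh : ∀ n l : ℕ, l < 2 → h' (2 * n + l) = l)
    (H : G →+ G) (hH : ∀ u : Finset ℕ, H (∑ n ∈ u, xg n) = ∑ n ∈ u, xg (h' n)) :
    ∀ ζ : Ordinal.{u}, ζ < omega1 →
      ISOWinsP (fun _ => 0) (fun _ => H) (MUuniv omega1)
        (.a 0 (xg 0)) (.a 0 (xg 1)) ζ := by
  intro ζ hζ
  obtain ⟨E0, hE0⟩ := lt_omega1_countable hζ
  obtain ⟨J, hJ⟩ := exists_JJ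
  refine ⟨fun ε mv => sig E0 J mv ε, fun ε mv mv' hag => sig_congr hag, ?_⟩
  intro mv hmv
  have hS : StratHyp E0 J mv ζ := ⟨hE0, hJ, hmv⟩
  refine ⟨?_, ?_, ?_, ?_, ?_⟩
  all_goals dsimp only
  · -- initial condition
    have hD0 : Dset E0 J mv 0 = {MU.a 0 (xg 0)} := by
      apply subset_antisymm
      · rintro u (rfl | ⟨δ, hδ, rfl⟩)
        · rfl
        · exact absurd hδ (not_lt_zero' (a := δ))
      · intro u hu
        exact Or.inl hu
    rw [sig, hD0, Set.image_singleton]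
    have heval : fnu (nuf E0 J mv 0) (MU.a 0 (xg 0)) = MU.a 0 (xg 1) := by
      show MU.a 0 (xg 0 + nuf E0 J mv 0 0) = MU.a 0 (xg 1)
      rw [nuf_zero, g_add_cancel]
    rw [heval]
  · -- partial isomorphisms
    intro ε hε
    exact partIso_graph (Dset_subset hS hε) (nuf_zero ε) (nuf_nice hS hε)
      (fun u hu => H_nuf h' hh H hH (covers_idx_Dset hu))
  · -- monotone
    intro ε ε' hεε' hε'
    exact sig_mono hS hεε' hε'
  · -- continuity at limits
    intro ε hε hlim
    apply subset_antisymm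
    · rintro q ⟨u, hu, rfl⟩
      rcases hu with rfl | ⟨δ, hδ, rfl⟩
      · have h0 : (0 : Ordinal) < ε := by
          rcases eq_zero_or_pos ε with rfl | h0
          · exact absurd (Ordinal.bot_eq_zero ▸ isMin_bot : IsMin (0 : Ordinal)) hlim.1
          · exact h0
        refine Set.mem_iUnion.2 ⟨0, Set.mem_iUnion.2 ⟨h0, ?_⟩⟩
        refine ⟨MU.a 0 (xg 0), Or.inl rfl, ?_⟩
        dsimp only
        rw [fnu_nuf_stable hS (zero_le (a := ε)) hε (Or.inl rfl)]
      · have hsδ : δ + 1 < ε := by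
          rw [Ordinal.add_one_eq_succ]
          exact hlim.succ_lt hδ
        have hdd : pick E0 J mv δ ∈ Dset E0 J mv (δ + 1) :=
          Or.inr ⟨δ, by rw [Ordinal.add_one_eq_succ]; exact Order.lt_succ δ, rfl⟩
        refine Set.mem_iUnion.2 ⟨δ + 1, Set.mem_iUnion.2 ⟨hsδ, ?_⟩⟩
        refine ⟨pick E0 J mv δ, hdd, ?_⟩
        dsimp only
        rw [fnu_nuf_stable hS hsδ.le hε hdd]
    · intro q hq
      simp only [Set.mem_iUnion] at hq
      obtain ⟨ξ, hξε, hq⟩ := hq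
      exact sig_mono hS hξε.le hε hq
  · -- covering the adversary's move
    intro ε hε
    have hsucc : ε < ε + 1 := by rw [Ordinal.add_one_eq_succ]; exact Order.lt_succ ε
    have hle : ε + 1 ≤ ζ := by rw [Ordinal.add_one_eq_succ]; exact Order.succ_le_of_lt hε
    cases hb : (mv ε).1 with
    | false =>
      rw [if_neg Bool.false_ne_true]
      refine ⟨pick E0 J mv ε, ?_⟩
      have hd : pick E0 J mv ε ∈ Dset E0 J mv (ε + 1) := Or.inr ⟨ε, hsucc, rfl⟩
      refine ⟨pick E0 J mv ε, hd, ?_⟩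
      dsimp only
      have hpick : pick E0 J mv ε = fnu (nuf E0 J mv (ε + 1)) (mv ε).2 := by
        rw [pick, hb]
        simp
      rw [hpick, fnu_fnu]
    | true =>
      rw [if_pos rfl]
      refine ⟨fnu (nuf E0 J mv (ε + 1)) (mv ε).2, ?_⟩
      have hpick : pick E0 J mv ε = (mv ε).2 := by
        rw [pick, hb]
        simp
      have hd : (mv ε).2 ∈ Dset E0 J mv (ε + 1) := Or.inr ⟨ε, hsucc, hpick.symm⟩
      exact ⟨(mv ε).2, hd, rfl⟩

/-! ### Part 3: cardinality -/

lemma mk_Iio_omega1 : Cardinal.mk ↥(Set.Iio (omega1 : Ordinal.{0})) = Cardinal.aleph 1 := by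
  rw [Ordinal.mk_Iio_ordinal, omega1, Cardinal.card_ord, Cardinal.lift_aleph,
    Ordinal.lift_one]

lemma infinite_Iio_omega1 : Infinite ↥(Set.Iio (omega1 : Ordinal.{0})) := by
  rw [Cardinal.infinite_iff, mk_Iio_omega1]
  exact Cardinal.aleph0_le_aleph 1

lemma mk_G : Cardinal.mk G = Cardinal.aleph0 := by
  have : Infinite G := Infinite.of_injective xg
    (fun n m hnm => by
      have := congrArg (fun y : G => y.support) hnm
      simpa [xg, Finsupp.support_single_ne_zero _ (one_ne_zero)] using this)
  exact Cardinal.mk_eq_aleph0 G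

open scoped Classical in
/-- Canonical coding of elements of `Gfam`. -/
def codeOf (T : Set G) : ℕ × ZMod 2 :=
  if h : ∃ p : ℕ × ZMod 2, T = lvl p.1 p.2 then h.choose else (0, 0)

lemma codeOf_spec {T : Set G} (hT : T ∈ Gfam) : T = lvl (codeOf T).1 (codeOf T).2 := by
  rw [mem_Gfam_iff] at hT
  obtain ⟨n, c, hnc⟩ := hT
  have hex : ∃ p : ℕ × ZMod 2, T = lvl p.1 p.2 := ⟨(n, c), hnc⟩
  rw [codeOf, dif_pos hex]
  exact hex.choose_spec

lemma codeOf_inj {T T' : Set G} (hT : T ∈ Gfam) (hT' : T' ∈ Gfam)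
    (h : codeOf T = codeOf T') : T = T' := by
  rw [codeOf_spec hT, codeOf_spec hT', h]

open scoped Classical in
/-- The canonical `n` for an `okB`-sequence. -/
def bcode (α : Ordinal) (η : Ordinal → Set G) : ℕ :=
  if h : ∃ n, {β : Ordinal | β < α ∧ η β ≠ G0 n}.Finite then h.choose else 0

lemma bcode_spec {α : Ordinal} {η : Ordinal → Set G} (hok : okB α η) :
    {β : Ordinal | β < α ∧ η β ≠ G0 (bcode α η)}.Finite := by
  obtain ⟨-, -, hfin⟩ := hok
  rw [bcode, dif_pos hfin]
  exact hfin.choose_spec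

/-- The type coding the exceptional values. -/
abbrev YY : Type 1 := ↥(Set.Iio (omega1 : Ordinal.{0})) × ULift.{1} (ℕ × ZMod 2)

def oin (α : Ordinal.{0}) : ↥(Set.Iio (omega1 : Ordinal.{0})) :=
  if h : α < omega1 then ⟨α, h⟩ else ⟨0, omega1_pos⟩

lemma oin_inj {α α' : Ordinal.{0}} (hα : α < omega1) (hα' : α' < omega1)
    (h : oin α = oin α') : α = α' := by
  rw [oin, oin, dif_pos hα, dif_pos hα'] at h
  exact Subtype.mk_eq_mk.1 h

/-- The finite exceptional data of a `b`-element. -/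
def bfin (α : Ordinal.{0}) (η : Ordinal → Set G) : Set YY :=
  {p | (p.1 : Ordinal) < α ∧ η p.1 ≠ G0 (bcode α η) ∧ p.2 = ULift.up (codeOf (η p.1))}

lemma bfin_finite {α : Ordinal.{0}} {η : Ordinal → Set G} (hok : okB α η) :
    (bfin α η).Finite := by
  apply Set.Finite.of_finite_image (f := fun p : YY => (p.1 : Ordinal))
  · apply Set.Finite.subset (bcode_spec hok)
    rintro β ⟨p, hp, rfl⟩
    exact ⟨hp.1, hp.2.1⟩
  · rintro p hp q hq hpq
    have h1 : p.1 = q.1 := Subtype.ext hpq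
    have h2 : p.2 = q.2 := by rw [hp.2.2, hq.2.2, h1]
    exact Prod.ext h1 h2

open scoped Classical in
def bfinset (α : Ordinal.{0}) (η : Ordinal → Set G) : Finset YY :=
  if h : (bfin α η).Finite then h.toFinset else ∅

/-- The encoding of the universe. -/
def encMU (u : MU) :
    (↥(Set.Iio (omega1 : Ordinal.{0})) × ULift.{1} G) ⊕
      (↥(Set.Iio (omega1 : Ordinal.{0})) × ULift.{1} ℕ × Finset YY) :=
  match u with
  | .a α g => Sum.inl (oin α, ULift.up g)
  | .b α η => Sum.inr (oin α, ULift.up (bcode α η), bfinset α η)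

lemma encMU_inj : Set.InjOn encMU (MUuniv omega1) := by
  rintro u hu u' hu' he
  cases u with
  | a α g =>
    cases u' with
    | a α' g' =>
      simp only [encMU, Sum.inl.injEq, Prod.mk.injEq] at he
      obtain ⟨h1, h2⟩ := he
      have hg : g = g' := congrArg ULift.down h2
      rw [oin_inj hu hu' h1, hg]
    | b α' η' => exact absurd he (by rw [encMU, encMU]; exact Sum.inl_ne_inr)
  | b α η =>
    cases u' with
    | a α' g' => exact absurd he (by rw [encMU, encMU]; exact Sum.inr_ne_inl)
    | b α' η' =>
      obtain ⟨hα, hok⟩ := hu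
      obtain ⟨hα', hok'⟩ := hu'
      simp only [encMU, Sum.inr.injEq, Prod.mk.injEq] at he
      obtain ⟨h1, h2', h3⟩ := he
      have h2 : bcode α η = bcode α' η' := congrArg ULift.down h2'
      have hαα : α = α' := oin_inj hα hα' h1
      subst hαα
      have hbf : bfin α η = bfin α η' := by
        rw [bfinset, bfinset, dif_pos (bfin_finite hok), dif_pos (bfin_finite hok')] at h3
        exact Set.Finite.toFinset_inj.1 h3
      congr 1
      funext β
      by_cases hβα : β < α
      · have hβ1 : β < omega1 := lt_trans hβα hα
        by_cases hexc : η β = G0 (bcode α η)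
        · by_cases hexc' : η' β = G0 (bcode α η')
          · rw [hexc, hexc', h2]
          · exfalso
            have hmem : (⟨⟨β, hβ1⟩, ULift.up (codeOf (η' β))⟩ : YY) ∈ bfin α η' :=
              ⟨hβα, hexc', rfl⟩
            rw [← hbf] at hmem
            exact hmem.2.1 hexc
        · have hmem : (⟨⟨β, hβ1⟩, ULift.up (codeOf (η β))⟩ : YY) ∈ bfin α η :=
            ⟨hβα, hexc, rfl⟩
          rw [hbf] at hmem
          obtain ⟨-, hne', hcd⟩ := hmem
          have hcd' : codeOf (η β) = codeOf (η' β) := congrArg ULift.down hcd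
          exact codeOf_inj (hok.1 β hβα) (hok'.1 β hβα) hcd'
      · rw [hok.2.1 β hβα, hok'.2.1 β hβα]

lemma mk_MUuniv : Cardinal.mk ↥(MUuniv omega1) = Cardinal.aleph 1 := by
  have hκ : Cardinal.aleph0 ≤ Cardinal.aleph 1 := Cardinal.aleph0_le_aleph 1
  apply le_antisymm
  · refine le_trans (Cardinal.mk_le_of_injective
      (f := fun u : ↥(MUuniv omega1) => encMU u.val) ?_) ?_
    · intro x y hxy
      exact Subtype.ext (encMU_inj x.2 y.2 hxy)
    · have hA : Cardinal.mk (↥(Set.Iio (omega1 : Ordinal.{0})) × ULift.{1} G) =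
          Cardinal.aleph 1 := by
        rw [Cardinal.mk_prod, Cardinal.lift_id, Cardinal.lift_id, mk_Iio_omega1,
          Cardinal.mk_uLift, mk_G, Cardinal.lift_aleph0, Cardinal.mul_eq_max hκ le_rfl]
        exact max_eq_left hκ
      have hY : Cardinal.mk YY = Cardinal.aleph 1 := by
        rw [Cardinal.mk_prod, Cardinal.lift_id, Cardinal.lift_id, mk_Iio_omega1,
          Cardinal.mk_uLift, Cardinal.mk_eq_aleph0 (ℕ × ZMod 2), Cardinal.lift_aleph0,
          Cardinal.mul_eq_max hκ le_rfl]
        exact max_eq_left hκ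
      have hYinf : Infinite YY := by
        rw [Cardinal.infinite_iff, hY]
        exact hκ
      have hFin : Cardinal.mk (Finset YY) = Cardinal.aleph 1 := by
        rw [Cardinal.mk_finset_of_infinite, hY]
      have hB : Cardinal.mk (↥(Set.Iio (omega1 : Ordinal.{0})) × ULift.{1} ℕ × Finset YY) =
          Cardinal.aleph 1 := by
        rw [Cardinal.mk_prod, Cardinal.lift_id, Cardinal.lift_id, mk_Iio_omega1,
          Cardinal.mk_prod, Cardinal.lift_id, Cardinal.lift_id, Cardinal.mk_uLift,
          Cardinal.mk_nat, Cardinal.lift_aleph0, hFin,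
          Cardinal.mul_eq_max le_rfl hκ, max_eq_right hκ, Cardinal.mul_eq_self hκ]
      rw [Cardinal.mk_sum, Cardinal.lift_id, Cardinal.lift_id, hA, hB,
        Cardinal.add_eq_self hκ]
  · rw [← mk_Iio_omega1]
    refine Cardinal.mk_le_of_injective
      (f := fun p : ↥(Set.Iio (omega1 : Ordinal.{0})) =>
        (⟨MU.a p.val 0, p.2⟩ : ↥(MUuniv omega1))) ?_
    intro x y hxy
    have h := congrArg Subtype.val hxy
    simp only [MU.a.injEq] at h
    exact Subtype.ext h.1

/-! ### Part 2: no automorphism -/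

def gpart : MU → G
  | .a _ x => x
  | .b _ _ => 0

lemma eta_isA {u : MU} (hu : isA u) : u = .a (idx u) (gpart u) := by
  cases u with
  | a α x => rfl
  | b α η => exact hu.elim

lemma aut_fix {H : G →+ G} {f : MU → MU}
    (hf : IsAutP (fun _ => 0) (fun _ => H) (MUuniv omega1) f) :
    ∃ c : Ordinal.{0} → G, ∀ α : Ordinal.{0}, α < omega1 → ∀ y : G,
      f (.a α y) = .a α (c α + y) := by
  classical
  set gg : Ordinal.{0} → Ordinal.{0} := fun α => idx (f (.a α 0)) with hgg
  set cc : Ordinal.{0} → G := fun α => gpart (f (.a α 0)) with hcc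
  have hmemS : ∀ α : Ordinal.{0}, α < omega1 → (MU.a α 0) ∈ MUuniv omega1 := fun α h => h
  have hfa : ∀ α, α < omega1 → f (.a α 0) = .a (gg α) (cc α) := by
    intro α hα
    exact eta_isA ((hf.p1 _ (hmemS α hα)).2 trivial)
  have hglt : ∀ α, α < omega1 → gg α < omega1 := by
    intro α hα
    have hm := hf.bij.mapsTo (hmemS α hα)
    rw [hfa α hα] at hm
    exact hm
  have hfval : ∀ α, α < omega1 → ∀ y, f (.a α y) = .a (gg α) (cc α + y) := by
    intro α hα y
    have h1 := hf.fy y _ (hmemS α hα)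
    have h2 : Fy y (MU.a α 0) = MU.a α y := by
      show MU.a α (0 + y) = MU.a α y
      rw [zero_add]
    rw [h2] at h1
    rw [h1, hfa α hα]
    rfl
  have hmono : ∀ α, α < omega1 → ∀ α', α' < omega1 → (gg α ≤ gg α' ↔ α ≤ α') := by
    intro α hα α' hα'
    have he := hf.e1 _ (hmemS α hα) _ (hmemS α' hα')
    rw [hfa α hα, hfa α' hα'] at he
    constructor
    · intro hle
      exact (he.1 ⟨trivial, trivial, hle⟩).2.2
    · intro hle
      exact (he.2 ⟨trivial, trivial, hle⟩).2.2
  have hstrict : ∀ α, α < omega1 → ∀ α', α' < omega1 → α < α' → gg α < gg α' := by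
    intro α hα α' hα' hlt
    by_contra hcon
    push_neg at hcon
    exact absurd ((hmono α' hα' α hα).1 hcon) (not_le.2 hlt)
  have hsurj : ∀ γ, γ < omega1 → ∃ α, α < omega1 ∧ gg α = γ := by
    intro γ hγ
    obtain ⟨u, huS, hfu⟩ := hf.bij.surjOn (hmemS γ hγ)
    have hisA : isA u := (hf.p1 u huS).1 (by rw [hfu]; trivial)
    have hu' := eta_isA hisA
    have hidx : idx u < omega1 := idx_lt_of_mem huS
    have hv := hfval (idx u) hidx (gpart u)
    rw [← hu', hfu] at hv
    simp only [MU.a.injEq] at hv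
    exact ⟨idx u, hidx, hv.1.symm⟩
  have hge : ∀ α, α < omega1 → α ≤ gg α := by
    by_contra hcon
    push_neg at hcon
    obtain ⟨α, hα, hlt⟩ := hcon
    have hne : {β : Ordinal.{0} | β < omega1 ∧ gg β < β}.Nonempty := ⟨α, hα, hlt⟩
    have hmem := csInf_mem hne
    have hb1 : gg (sInf {β : Ordinal.{0} | β < omega1 ∧ gg β < β}) < omega1 :=
      hglt _ hmem.1
    have hb2 := hstrict _ hb1 _ hmem.1 hmem.2
    have hmem2 : gg (sInf {β : Ordinal.{0} | β < omega1 ∧ gg β < β}) ∈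
        {β : Ordinal.{0} | β < omega1 ∧ gg β < β} := ⟨hb1, hb2⟩
    exact absurd (csInf_le' hmem2) (not_le.2 hmem.2)
  have hid : ∀ α, α < omega1 → gg α = α := by
    by_contra hcon
    push_neg at hcon
    obtain ⟨α, hα, hne'⟩ := hcon
    have hne : {β : Ordinal.{0} | β < omega1 ∧ gg β ≠ β}.Nonempty := ⟨α, hα, hne'⟩
    have hmem := csInf_mem hne
    set β0 := sInf {β : Ordinal.{0} | β < omega1 ∧ gg β ≠ β} with hβ0
    have hgt : β0 < gg β0 := lt_of_le_of_ne (hge β0 hmem.1) (Ne.symm hmem.2)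
    obtain ⟨δ, hδ, hgδ⟩ := hsurj β0 hmem.1
    rcases lt_trichotomy δ β0 with h | h | h
    · have hδfix : gg δ = δ := by
        by_contra hd
        have hmemδ : δ ∈ {β : Ordinal.{0} | β < omega1 ∧ gg β ≠ β} := ⟨hδ, hd⟩
        exact absurd (csInf_le' hmemδ) (not_le.2 h)
      rw [hδfix] at hgδ
      exact (ne_of_lt h) hgδ
    · rw [h] at hgδ
      exact hmem.2 hgδ
    · have hst := hstrict β0 hmem.1 δ hδ h
      rw [hgδ] at hst
      exact absurd hst (not_lt.2 hgt.le)
  refine ⟨cc, ?_⟩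
  intro α hα y
  have hv := hfval α hα y
  rwa [hid α hα] at hv

lemma x01_ne_zero : xg 0 + xg 1 ≠ 0 := by
  intro hcon
  have h0 : (xg 0 + xg 1 : G) 0 = 0 := by rw [hcon]; rfl
  rw [Finsupp.add_apply, xg_apply_self, xg_apply_ne (by norm_num), add_zero] at h0
  exact one_ne_zero h0

lemma zero_mem_G0 (n : ℕ) : (0 : G) ∈ G0 n := by
  rw [G0_eq]
  show (0 : G) n = 0
  rfl

lemma part2 (H : G →+ G) :
    ¬ ∃ f : MU → MU, IsAutP (fun _ => 0) (fun _ => H) (MUuniv omega1) f ∧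
        f (.a 0 (xg 0)) = .a 0 (xg 1) := by
  rintro ⟨f, hf, hf0⟩
  obtain ⟨c, hc⟩ := aut_fix hf
  have h00 : c 0 + xg 0 = xg 1 := by
    have hv := hc 0 omega1_pos (xg 0)
    rw [hf0] at hv
    simp only [MU.a.injEq] at hv
    exact hv.2.symm
  have hc0 : c 0 = xg 0 + xg 1 := by
    have hv : c 0 + xg 0 + xg 0 = xg 1 + xg 0 := by rw [h00]
    rw [add_assoc, g_add_self, add_zero] at hv
    rw [hv, add_comm]
  have hHc : ∀ β, β < omega1 → H (c β) = xg 0 + xg 1 := by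
    intro β hβ
    have hm1 : (MU.a 0 0 : MU) ∈ MUuniv omega1 := omega1_pos
    have hm2 : (MU.a β 0 : MU) ∈ MUuniv omega1 := hβ
    have hr := hf.r1 _ hm1 _ hm2
    have hR : R1 (fun _ => 0) (fun _ => H) (MU.a 0 0) (MU.a β 0) :=
      ⟨β, 0, 0, hβ, rfl, rfl, map_zero H⟩
    have hr2 := hr.2 hR
    rw [hc 0 omega1_pos 0, hc β hβ 0] at hr2
    obtain ⟨α', y₁, y₂, hα', he1, he2, hHe⟩ := hr2
    simp only [MU.a.injEq, add_zero] at he1 he2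
    rw [← he1.2, ← he2.2] at hHe
    rw [hHe]
    exact hc0
  -- key finiteness at each infinite level
  have hkey : ∀ α' : Ordinal.{0}, α' < omega1 → Ordinal.omega0 ≤ α' → ∀ n : ℕ,
      {β : Ordinal.{0} | β < α' ∧ c β n ≠ 0}.Finite := by
    intro α' hα' hω n
    set η : Ordinal.{0} → Set G := fun β => if β < α' then G0 n else ∅ with hη
    have hηval : ∀ β, β < α' → η β = G0 n := by
      intro β hβ
      rw [hη]
      dsimp only
      rw [if_pos hβ]
    have hok : okB α' η := by
      refine ⟨?_, ?_, n, ?_⟩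
      · intro β hβ
        rw [hηval β hβ]
        exact ⟨n, Or.inl rfl⟩
      · intro β hβ
        rw [hη]
        dsimp only
        rw [if_neg hβ]
      · apply Set.Finite.subset Set.finite_empty
        rintro β ⟨hβ, hne⟩
        exact absurd (hηval β hβ) hne
    have huS : (MU.b α' η) ∈ MUuniv omega1 := ⟨hα', hok⟩
    have hfbS := hf.bij.mapsTo huS
    have hnA : ¬ isA (f (MU.b α' η)) := by
      rw [hf.p1 _ huS]
      exact id
    obtain ⟨α'', η', hfb⟩ : ∃ α'' η', f (MU.b α' η) = MU.b α'' η' := by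
      cases hfbb : f (MU.b α' η) with
      | a _ _ => exact absurd (by rw [hfbb]; trivial) hnA
      | b a e => exact ⟨a, e, rfl⟩
    rw [hfb] at hfbS
    obtain ⟨hα'', hok'⟩ := hfbS
    have htrans : ∀ β, β < α' → ∀ y, y ∈ G0 n → β < α'' ∧ c β + y ∈ η' β := by
      intro β hβ y hy
      have hβ1 : β < omega1 := lt_trans hβ hα'
      have hrm : Rmem (MU.b α' η) (MU.a β y) :=
        ⟨α', η, β, y, rfl, rfl, hβ, by rw [hηval β hβ]; exact hy⟩
      have hm3 : (MU.a β y : MU) ∈ MUuniv omega1 := hβ1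
      have hrm2 := (hf.r _ huS _ hm3).2 hrm
      rw [hfb, hc β hβ1 y] at hrm2
      obtain ⟨β', η'', α''', g', he1, he2, hlt, hg⟩ := hrm2
      simp only [MU.b.injEq] at he1
      simp only [MU.a.injEq] at he2
      obtain ⟨hb1, hb2⟩ := he1
      obtain ⟨ha1, ha2⟩ := he2
      rw [← hb1] at hlt
      rw [← ha1] at hlt
      rw [← hb2, ← ha2] at hg
      rw [← ha1] at hg
      exact ⟨hlt, hg⟩
    have hcoset : ∀ β, β < α' → η' β = lvl n (c β n) := by
      intro β hβ
      have h1 : (fun z => c β + z) '' G0 n ⊆ η' β := by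
        rintro y' ⟨y, hy, rfl⟩
        exact (htrans β hβ y hy).2
      rw [G0_eq, image_lvl, add_zero] at h1
      have h2 : η' β ∈ Gfam := hok'.1 β (htrans β hβ 0 (zero_mem_G0 n)).1
      obtain ⟨m, d, hmd⟩ := mem_Gfam_iff.1 h2
      rw [hmd] at h1 ⊢
      obtain ⟨hnm, hcd⟩ := lvl_subset h1
      rw [← hnm, ← hcd]
    obtain ⟨m, hfin⟩ := hok'.2.2
    by_cases hmn : m = n
    · subst hmn
      apply Set.Finite.subset hfin
      rintro β ⟨hβ, hcn⟩
      refine ⟨(htrans β hβ 0 (zero_mem_G0 m)).1, ?_⟩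
      rw [hcoset β hβ, G0_eq]
      intro hcon
      exact hcn (lvl_inj hcon).2
    · exfalso
      have hinf : {β : Ordinal.{0} | β < α'' ∧ η' β ≠ G0 m}.Infinite := by
        apply Set.infinite_of_injective_forall_mem (f := fun k : ℕ => (k : Ordinal.{0}))
        · intro a b hab
          exact Nat.cast_inj.1 hab
        · intro k
          have hkα' : (k : Ordinal.{0}) < α' :=
            lt_of_lt_of_le (Ordinal.nat_lt_omega0 k) hω
          refine ⟨(htrans _ hkα' 0 (zero_mem_G0 n)).1, ?_⟩
          rw [hcoset _ hkα', G0_eq]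
          intro hcon
          exact hmn ((lvl_inj hcon).1).symm
      exact hinf hfin
  have hkey' : ∀ α : Ordinal.{0}, α < omega1 → ∀ n : ℕ,
      {β : Ordinal.{0} | β < α ∧ c β n ≠ 0}.Finite := by
    intro α hα n
    have hα' : α + Ordinal.omega0 < omega1 := by
      rw [omega1, Cardinal.lt_ord, Ordinal.card_add, Ordinal.card_omega0]
      exact Cardinal.add_lt_of_lt (Cardinal.aleph0_le_aleph 1)
        (Cardinal.lt_ord.1 hα) Cardinal.aleph0_lt_aleph_one
    apply Set.Finite.subset (hkey _ hα' (le_add_self) n)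
    rintro β ⟨h1, h2⟩
    exact ⟨lt_of_lt_of_le h1 (le_self_add), h2⟩
  have hSn : ∀ n : ℕ, {β : Ordinal.{0} | β < omega1 ∧ c β n ≠ 0}.Finite := by
    intro n
    by_contra hcon
    rw [← Set.not_infinite, not_not] at hcon
    have e := hcon.natEmbedding
    set F : ℕ → Ordinal.{0} := fun k => (e k).1 with hF
    have hsup : iSup F < omega1 := by
      rw [omega1]
      apply Ordinal.iSup_lt_ord
      · rw [Cardinal.isRegular_aleph_one.cof_eq, Cardinal.mk_nat]
        exact Cardinal.aleph0_lt_aleph_one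
      · intro k
        exact (e k).2.1
    have hfin := hkey' (iSup F + 1) (succ_lt_omega1 hsup) n
    have hinf : {β : Ordinal.{0} | β < iSup F + 1 ∧ c β n ≠ 0}.Infinite := by
      apply Set.infinite_of_injective_forall_mem (f := F)
      · intro a b hab
        have := e.injective (Subtype.ext hab)
        exact this
      · intro k
        refine ⟨?_, (e k).2.2⟩
        exact lt_of_le_of_lt (Ordinal.le_iSup F k)
          (by rw [Ordinal.add_one_eq_succ]; exact Order.lt_succ _)
    exact hinf hfin
  have hcover : Set.Iio (omega1 : Ordinal.{0}) ⊆
      ⋃ n : ℕ, {β : Ordinal.{0} | β < omega1 ∧ c β n ≠ 0} := by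
    intro β hβ
    have hcne : c β ≠ 0 := by
      intro h0
      have hx := hHc β hβ
      rw [h0, map_zero] at hx
      exact x01_ne_zero hx.symm
    obtain ⟨n, hn⟩ : ∃ n, c β n ≠ 0 := by
      by_contra hall
      push_neg at hall
      apply hcne
      ext n
      simp [hall n]
    exact Set.mem_iUnion.2 ⟨n, hβ, hn⟩
  have hcnt : (Set.Iio (omega1 : Ordinal.{0})).Countable :=
    Set.Countable.mono hcover (Set.countable_iUnion (fun n => (hSn n).countable))
  have hmk : Cardinal.mk ↥(Set.Iio (omega1 : Ordinal.{0})) ≤ Cardinal.aleph0 :=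
    Cardinal.le_aleph0_iff_set_countable.2 hcnt
  rw [mk_Iio_omega1] at hmk
  exact absurd hmk (not_le.2 Cardinal.aleph0_lt_aleph_one)

/-- For every `ζ < ω₁`, the pointed structures `(N, (0, x₀))` and
`(N, (0, x₁))` (where `N = M_p` as in the previous statement) are
`EF_ζ`-equivalent: the isomorphism player wins the Ehrenfeucht–Fraïssé game of
length `ζ`. Consequently there exist non-isomorphic structures of cardinality
`ℵ₁` that are `EF_ζ`-equivalent for every `ζ < ω₁`: the two pointed structures
above have universe of cardinality `ℵ₁` and are not isomorphic. -/
theorem stmt16 (h : ℕ → ℕ) (hh : ∀ n l : ℕ, l < 2 → h (2 * n + l) = l)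
    (H : G →+ G) (hH : ∀ u : Finset ℕ, H (∑ n ∈ u, xg n) = ∑ n ∈ u, xg (h n)) :
    (∀ ζ < omega1,
      ISOWinsP (fun _ => 0) (fun _ => H) (MUuniv omega1)
        (.a 0 (xg 0)) (.a 0 (xg 1)) ζ) ∧
    (¬ ∃ f : MU → MU, IsAutP (fun _ => 0) (fun _ => H) (MUuniv omega1) f ∧
        f (.a 0 (xg 0)) = .a 0 (xg 1)) ∧
    Cardinal.mk ↥(MUuniv omega1) = Cardinal.aleph 1 := by
  exact ⟨part1 h hh H hH, part2 H, mk_MUuniv⟩
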